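/- Suppose f(x+s) ≤ T_p(x,s) + (L/p)‖s‖^{p+1} and T_p(x,0) − T_p(x,s) ≥ (σ/(p+1))‖s‖^{p+1} > 0, and also T_p(x,s) ≤ f(x+s) + (L/p)‖s‖^{p+1}. Define ρ = (f(x) − f(x+s))/(T_p(x,0) − T_p(x,s)). Then |ρ − 1| ≤ L(p+1)/(p·σ). In particular, if σ ≥ L(p+1)/(p(1−η₂)) for some η₂ ∈ (0,1), then ρ ≥ η₂. -/

import Mathlib

open scoped BigOperators

/-- The degree-`p` Taylor polynomial of `f` at `x`, evaluated at increment `s`. -/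
noncomputable def taylorP {n : ℕ} (p : ℕ) (f : EuclideanSpace ℝ (Fin n) → ℝ)
    (x s : EuclideanSpace ℝ (Fin n)) : ℝ :=
  ∑ j ∈ Finset.range (p + 1),
    (1 / (j.factorial : ℝ)) * iteratedFDeriv ℝ j f x (fun _ => s)

lemma taylorP_zero {n : ℕ} (p : ℕ) (f : EuclideanSpace ℝ (Fin n) → ℝ)
    (x : EuclideanSpace ℝ (Fin n)) : taylorP p f x 0 = f x := by
  unfold taylorP
  rw [Finset.sum_eq_single 0]
  · simp [iteratedFDeriv_zero_apply]
  · intro j _ hj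
    have : (iteratedFDeriv ℝ j f x) (fun _ => (0 : EuclideanSpace ℝ (Fin n))) = 0 := by
      have hne : Nonempty (Fin j) := ⟨⟨0, Nat.pos_of_ne_zero hj⟩⟩
      exact (iteratedFDeriv ℝ j f x).map_coord_zero (Classical.arbitrary (Fin j)) rfl
    simp [this]
  · intro h; exact absurd (Finset.mem_range.2 (Nat.succ_pos p)) h

theorem stmt6 {n : ℕ} (p : ℕ) (hp : 2 ≤ p) (f : EuclideanSpace ℝ (Fin n) → ℝ)
    (x s : EuclideanSpace ℝ (Fin n)) (L σ : ℝ) (hL : 0 ≤ L) (hσ : 0 < σ)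
    (hub : f (x + s) ≤ taylorP p f x s + L / p * ‖s‖ ^ (p + 1))
    (hlb : taylorP p f x s ≤ f (x + s) + L / p * ‖s‖ ^ (p + 1))
    (hdec : taylorP p f x 0 - taylorP p f x s ≥ σ / ((p : ℝ) + 1) * ‖s‖ ^ (p + 1))
    (hpos : 0 < σ / ((p : ℝ) + 1) * ‖s‖ ^ (p + 1)) :
    |(f x - f (x + s)) / (taylorP p f x 0 - taylorP p f x s) - 1| ≤
        L * ((p : ℝ) + 1) / ((p : ℝ) * σ) ∧
      ∀ η₂ : ℝ, 0 < η₂ → η₂ < 1 → σ ≥ L * ((p : ℝ) + 1) / ((p : ℝ) * (1 - η₂)) →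
        (f x - f (x + s)) / (taylorP p f x 0 - taylorP p f x s) ≥ η₂ := by
  have hpR : (0 : ℝ) < p := by positivity
  have hp1 : (0 : ℝ) < (p : ℝ) + 1 := by positivity
  have hsnorm : 0 < ‖s‖ ^ (p + 1) := by
    by_contra h
    push_neg at h
    nlinarith [div_pos hσ hp1]
  set D := taylorP p f x 0 - taylorP p f x s with hD
  have hDpos : 0 < D := lt_of_lt_of_le hpos hdec
  have hT0 : taylorP p f x 0 = f x := taylorP_zero p f x
  have hkey : |(f x - f (x + s)) / D - 1| ≤ L * ((p : ℝ) + 1) / ((p : ℝ) * σ) := by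
    have heq : (f x - f (x + s)) / D - 1 = (taylorP p f x s - f (x + s)) / D := by
      field_simp
      linarith [hT0]
    rw [heq, abs_div, abs_of_pos hDpos]
    have hnum : |taylorP p f x s - f (x + s)| ≤ L / p * ‖s‖ ^ (p + 1) := by
      rw [abs_le]; constructor <;> linarith
    calc |taylorP p f x s - f (x + s)| / D
        ≤ (L / p * ‖s‖ ^ (p + 1)) / (σ / ((p : ℝ) + 1) * ‖s‖ ^ (p + 1)) := by
          apply div_le_div₀ (by positivity) hnum hpos hdec
      _ = L * ((p : ℝ) + 1) / ((p : ℝ) * σ) := by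
          field_simp
  refine ⟨hkey, fun η₂ hη0 hη1 hση => ?_⟩
  have h1η : 0 < 1 - η₂ := by linarith
  have hb : L * ((p : ℝ) + 1) / ((p : ℝ) * σ) ≤ 1 - η₂ := by
    rw [div_le_iff₀ (by positivity)]
    rw [ge_iff_le, div_le_iff₀ (by positivity)] at hση
    nlinarith
  have := abs_le.1 hkey
  linarith [this.1]
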